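/- Let k ∈ ℕ and let u, v be finite words over a finite alphabet Σ such that u ≡prefFO_{k+1} v. Then there exist finite words u', v' such that u·u' ≡FO_k v and u ≡FO_k v·v'. -/

import Mathlib

set_option maxHeartbeats 1000000

namespace PrefSynth

/-! ### Possibly infinite words -/

/-- A (finite or infinite) word over alphabet `A`: positions carrying `some` letter. -/
abbrev Word (A : Type) : Type := ℕ → Option A

/-- `m` is a position of the word `w`. -/
def Word.pos {A : Type} (w : Word A) (m : ℕ) : Prop := w m ≠ none

/-- A genuine word: its domain is downward closed. -/
def Word.Closed {A : Type} (w : Word A) : Prop :=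
  ∀ i j : ℕ, i ≤ j → w j ≠ none → w i ≠ none

/-- The finite word given by a list. -/
def Word.ofList {A : Type} (l : List A) : Word A := fun i => l[i]?

/-- The infinite word given by a function. -/
def Word.ofFun {A : Type} (u : ℕ → A) : Word A := fun i => some (u i)

/-- The prefix of a word consisting of its first `n` positions; `Word.take w (m+1)`
is `w[0…m]`. -/
def Word.take {A : Type} (w : Word A) (n : ℕ) : Word A :=
  fun i => if i < n then w i else none

/-- `u` is a prefix of `v`. -/
def Word.IsPrefix {A : Type} (u v : Word A) : Prop :=
  ∀ i, u i ≠ none → v i = u i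

/-! ### Prefix first-order logic on words

Formulas in context `n`: the free variables are `Fin n`; when `n ≥ 1`, the variable
`0` is the bounding variable `x̄`, all other variables are prefix variables, and
every quantifier is of the form `∃ x < x̄` (new variables are appended at the end,
i.e. interpreted through `Fin.snoc`). -/

inductive PFm (A : Type) : ℕ → Type where
  | eq {n} : Fin n → Fin n → PFm A n
  | lt {n} : Fin n → Fin n → PFm A n
  | letter {n} : A → Fin n → PFm A n
  | and {n} : PFm A n → PFm A n → PFm A n
  | not {n} : PFm A n → PFm A n
  | exlt {n} : PFm A (n + 2) → PFm A (n + 1)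

/-- Quantifier depth. -/
def PFm.depth {A : Type} : {n : ℕ} → PFm A n → ℕ
  | _, .eq _ _ => 0
  | _, .lt _ _ => 0
  | _, .letter _ _ => 0
  | _, .and φ ψ => max φ.depth ψ.depth
  | _, .not φ => φ.depth
  | _, .exlt φ => φ.depth + 1

/-- Satisfaction of a prefFO formula in a word, under an assignment of the
free variables to positions. -/
def PFm.Sat {A : Type} (w : Word A) : {n : ℕ} → PFm A n → (Fin n → ℕ) → Prop
  | _, .eq i j, ρ => ρ i = ρ j
  | _, .lt i j, ρ => ρ i < ρ j
  | _, .letter a i, ρ => w (ρ i) = some a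
  | _, .and φ ψ, ρ => PFm.Sat w φ ρ ∧ PFm.Sat w ψ ρ
  | _, .not φ, ρ => ¬ PFm.Sat w φ ρ
  | _, .exlt φ, ρ => ∃ m : ℕ, Word.pos w m ∧ m < ρ 0 ∧ PFm.Sat w φ (Fin.snoc ρ m)

/-- prefFO sentences: start by quantifying the bounding variable, and are closed
under boolean combinations. -/
inductive PSen (A : Type) : Type where
  | exB : PFm A 1 → PSen A
  | and : PSen A → PSen A → PSen A
  | not : PSen A → PSen A

/-- Quantifier depth of a sentence. -/
def PSen.depth {A : Type} : PSen A → ℕ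
  | .exB φ => φ.depth + 1
  | .and s t => max s.depth t.depth
  | .not s => s.depth

/-- Satisfaction of a prefFO sentence in a word. -/
def PSen.Sat {A : Type} (w : Word A) : PSen A → Prop
  | .exB φ => ∃ m : ℕ, Word.pos w m ∧ PFm.Sat w φ (fun _ => m)
  | .and s t => PSen.Sat w s ∧ PSen.Sat w t
  | .not s => ¬ PSen.Sat w s

/-- The prefFO `k`-type of a word: the set of prefFO sentences of quantifier
depth at most `k` it satisfies. -/
def tp {A : Type} (k : ℕ) (w : Word A) : Set (PSen A) :=
  {s | PSen.depth s ≤ k ∧ PSen.Sat w s}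

/-- `Types_k`: the set of prefFO `k`-types of finite words over `A`. -/
def WTypes (A : Type) (k : ℕ) : Set (Set (PSen A)) :=
  {T | ∃ l : List A, T = tp k (Word.ofList l)}

/-- The relation `⪯` on types: `τ ⪯ τ'` iff some finite word of type `τ` has an
extension of type `τ'`. -/
def typeLe {A : Type} (k : ℕ) (τ τ' : Set (PSen A)) : Prop :=
  ∃ u v : List A, tp k (Word.ofList u) = τ ∧ tp k (Word.ofList (u ++ v)) = τ'

/-- Two words agree on all prefFO sentences of quantifier depth at most `k`. -/
def prefEquiv {A : Type} (k : ℕ) (w w' : Word A) : Prop :=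
  ∀ s : PSen A, PSen.depth s ≤ k → (PSen.Sat w s ↔ PSen.Sat w' s)

/-! ### Full first-order logic on words -/

inductive FOFm (A : Type) : ℕ → Type where
  | eq {n} : Fin n → Fin n → FOFm A n
  | lt {n} : Fin n → Fin n → FOFm A n
  | letter {n} : A → Fin n → FOFm A n
  | and {n} : FOFm A n → FOFm A n → FOFm A n
  | not {n} : FOFm A n → FOFm A n
  | ex {n} : FOFm A (n + 1) → FOFm A n

def FOFm.depth {A : Type} : {n : ℕ} → FOFm A n → ℕ
  | _, .eq _ _ => 0
  | _, .lt _ _ => 0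
  | _, .letter _ _ => 0
  | _, .and φ ψ => max φ.depth ψ.depth
  | _, .not φ => φ.depth
  | _, .ex φ => φ.depth + 1

def FOFm.Sat {A : Type} (w : Word A) : {n : ℕ} → FOFm A n → (Fin n → ℕ) → Prop
  | _, .eq i j, ρ => ρ i = ρ j
  | _, .lt i j, ρ => ρ i < ρ j
  | _, .letter a i, ρ => w (ρ i) = some a
  | _, .and φ ψ, ρ => FOFm.Sat w φ ρ ∧ FOFm.Sat w ψ ρ
  | _, .not φ, ρ => ¬ FOFm.Sat w φ ρ
  | _, .ex φ, ρ => ∃ m : ℕ, Word.pos w m ∧ FOFm.Sat w φ (Fin.snoc ρ m)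

/-- Two words agree on all FO sentences of quantifier depth at most `k`. -/
def foEquiv {A : Type} (k : ℕ) (w w' : Word A) : Prop :=
  ∀ s : FOFm A 0, FOFm.depth s ≤ k →
    (FOFm.Sat w s Fin.elim0 ↔ FOFm.Sat w' s Fin.elim0)

/-! ### The prefix Ehrenfeucht–Fraïssé game on words

After the first (bounding) round, pebbles are kept as matched pairs of
positions: `(m, m')` with `m` in the first word and `m'` in the second. -/

/-- The agreement condition: the correspondence between pebbled positions
preserves equality, the order `<` and the letters. -/
def AgreeW {A : Type} (u v : Word A) (L : List (ℕ × ℕ)) : Prop :=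
  ∀ p ∈ L, ∀ q ∈ L,
    ((p.1 = q.1) ↔ (p.2 = q.2)) ∧ ((p.1 < q.1) ↔ (p.2 < q.2)) ∧
    (∀ a : A, u p.1 = some a ↔ v p.2 = some a)

/-- `DupWinW u v b b' r L`: with bounding pebbles placed on `b` (in `u`) and `b'`
(in `v`), and prefix pebbles `L` already placed, Duplicator wins the game with `r`
remaining rounds. -/
def DupWinW {A : Type} (u v : Word A) (b b' : ℕ) : ℕ → List (ℕ × ℕ) → Prop
  | 0, L => AgreeW u v ((b, b') :: L)
  | r + 1, L => AgreeW u v ((b, b') :: L) ∧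
      (∀ m, Word.pos u m → m < b →
        ∃ m', Word.pos v m' ∧ m' < b' ∧ DupWinW u v b b' r ((m, m') :: L)) ∧
      (∀ m', Word.pos v m' → m' < b' →
        ∃ m, Word.pos u m ∧ m < b ∧ DupWinW u v b b' r ((m, m') :: L))

/-! ### Data words -/

/-- A move of a data word: a System action together with a System process, or an
Environment action together with an Environment process. `A`, `B` are the System
and Environment alphabets; `P`, `Q` the System and Environment process sets. -/
abbrev DMove (A B P Q : Type) : Type := (A × P) ⊕ (B × Q)

/-- The process of a move. -/
def dproc {A B P Q : Type} : DMove A B P Q → P ⊕ Q :=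
  Sum.elim (fun ap => Sum.inl ap.2) (fun bq => Sum.inr bq.2)

/-- The action of a move. -/
def dact {A B P Q : Type} : DMove A B P Q → A ⊕ B :=
  Sum.elim (fun ap => Sum.inl ap.1) (fun bq => Sum.inr bq.1)

/-- The process acting at position `m` of a data word. -/
def procAt {A B P Q : Type} (d : Word (DMove A B P Q)) (m : ℕ) : Option (P ⊕ Q) :=
  (d m).map dproc

/-- The action taken at position `m` of a data word. -/
def actAt {A B P Q : Type} (d : Word (DMove A B P Q)) (m : ℕ) : Option (A ⊕ B) :=
  (d m).map dact

/-- Elements of the structure associated with a data word: one process element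
for every process, and one element for every position. -/
abbrev Elem (P Q : Type) : Type := (P ⊕ Q) ⊕ ℕ

/-- The `∼`-class (i.e. the process) of an element of a data word. -/
def classOfE {A B P Q : Type} (d : Word (DMove A B P Q)) : Elem P Q → Option (P ⊕ Q)
  | .inl q => some q
  | .inr m => procAt d m

/-! ### Prefix first-order logic on data words

`PDW A B p b x` : formulas in a context with `p` process variables, `b` bounding
variables and `x` prefix variables.  Sentences (possibly with constants, constants
being modelled as the initial free variables) are obtained by instantiating the
contexts. -/

/-- A variable of any of the three kinds. -/
abbrev DVar (p b x : ℕ) : Type := Fin p ⊕ (Fin b ⊕ Fin x)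

inductive PDW (A B : Type) : ℕ → ℕ → ℕ → Type where
  | eq {p b x} : DVar p b x → DVar p b x → PDW A B p b x
  | procS {p b x} : Fin p → PDW A B p b x
  | procE {p b x} : Fin p → PDW A B p b x
  | letter {p b x} : (A ⊕ B) → (Fin b ⊕ Fin x) → PDW A B p b x
  | lesim {p b x} : Fin x → Fin x → PDW A B p b x
  | sim {p b x} : Fin p → DVar p b x → PDW A B p b x
  | and {p b x} : PDW A B p b x → PDW A B p b x → PDW A B p b x
  | not {p b x} : PDW A B p b x → PDW A B p b x
  | exP {p b x} : PDW A B (p + 1) b x → PDW A B p b x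
  | exB {p b x} : PDW A B p (b + 1) x → PDW A B p b x
  | exX {p b x} : Fin b → PDW A B p b (x + 1) → PDW A B p b x

/-- Quantifier depth. -/
def PDW.depth {A B : Type} : {p b x : ℕ} → PDW A B p b x → ℕ
  | _, _, _, .eq _ _ => 0
  | _, _, _, .procS _ => 0
  | _, _, _, .procE _ => 0
  | _, _, _, .letter _ _ => 0
  | _, _, _, .lesim _ _ => 0
  | _, _, _, .sim _ _ => 0
  | _, _, _, .and φ ψ => max φ.depth ψ.depth
  | _, _, _, .not φ => φ.depth
  | _, _, _, .exP φ => φ.depth + 1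
  | _, _, _, .exB φ => φ.depth + 1
  | _, _, _, .exX _ φ => φ.depth + 1

/-- Interpretation of a variable as an element of the data-word structure. -/
def interpDVar {P Q : Type} {p b x : ℕ} (ρP : Fin p → P ⊕ Q) (ρB : Fin b → ℕ)
    (ρX : Fin x → ℕ) : DVar p b x → Elem P Q
  | .inl i => Sum.inl (ρP i)
  | .inr (.inl i) => Sum.inr (ρB i)
  | .inr (.inr i) => Sum.inr (ρX i)

/-- Satisfaction of a prefFO^dw formula in a data word, under assignments of the
process, bounding and prefix variables.  New bounding variables must be positions
lying in a fresh class (w.r.t. all present bounding variables), new prefix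
variables must be `≲` their associated bounding variable. -/
def PDW.Sat {A B P Q : Type} (d : Word (DMove A B P Q)) :
    {p b x : ℕ} → PDW A B p b x → (Fin p → P ⊕ Q) → (Fin b → ℕ) → (Fin x → ℕ) → Prop
  | _, _, _, .eq v w, ρP, ρB, ρX => interpDVar ρP ρB ρX v = interpDVar ρP ρB ρX w
  | _, _, _, .procS i, ρP, _, _ => ∃ q : P, ρP i = Sum.inl q
  | _, _, _, .procE i, ρP, _, _ => ∃ q : Q, ρP i = Sum.inr q
  | _, _, _, .letter a v, _, ρB, ρX => actAt d (Sum.elim ρB ρX v) = some a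
  | _, _, _, .lesim i j, _, _, ρX =>
      ρX i < ρX j ∧ ∃ q, procAt d (ρX i) = some q ∧ procAt d (ρX j) = some q
  | _, _, _, .sim i v, ρP, ρB, ρX => classOfE d (interpDVar ρP ρB ρX v) = some (ρP i)
  | _, _, _, .and φ ψ, ρP, ρB, ρX => PDW.Sat d φ ρP ρB ρX ∧ PDW.Sat d ψ ρP ρB ρX
  | _, _, _, .not φ, ρP, ρB, ρX => ¬ PDW.Sat d φ ρP ρB ρX
  | _, _, _, .exP φ, ρP, ρB, ρX => ∃ q : P ⊕ Q, PDW.Sat d φ (Fin.snoc ρP q) ρB ρX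
  | _, _, _, .exB φ, ρP, ρB, ρX => ∃ m : ℕ, d m ≠ none ∧
      (∀ j, procAt d m ≠ procAt d (ρB j)) ∧ PDW.Sat d φ ρP (Fin.snoc ρB m) ρX
  | _, _, _, .exX y φ, ρP, ρB, ρX => ∃ m : ℕ, d m ≠ none ∧ m < ρB y ∧
      procAt d m = procAt d (ρB y) ∧ PDW.Sat d φ ρP ρB (Fin.snoc ρX m)

/-- Satisfaction of a prefFO^dw sentence (no constants) in a data word. -/
def SatS {A B P Q : Type} (d : Word (DMove A B P Q)) (φ : PDW A B 0 0 0) : Prop :=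
  PDW.Sat d φ Fin.elim0 Fin.elim0 Fin.elim0

/-! ### Classes of a data word -/

/-- `m` is a position of process `q` in the data word `d`. -/
def isPosOf {A B P Q : Type} (d : Word (DMove A B P Q)) (q : P ⊕ Q) (m : ℕ) : Prop :=
  procAt d m = some q

open Classical in
/-- The class of process `q` in the data word `d`, as a (finite or infinite) word
over `A ⊕ B`: its `i`-th letter is the action taken at the `i`-th position of `q`. -/
noncomputable def classWord {A B P Q : Type} (d : Word (DMove A B P Q)) (q : P ⊕ Q) :
    Word (A ⊕ B) :=
  fun i =>
    if {m | isPosOf d q m}.Infinite ∨ i < Set.ncard {m | isPosOf d q m}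
    then actAt d (Nat.nth (isPosOf d q) i) else none

/-- The set of processes of `d` whose class has prefFO `k`-type `τ`. -/
def classesOfType {A B P Q : Type} (d : Word (DMove A B P Q)) (k : ℕ)
    (τ : Set (PSen (A ⊕ B))) : Set (P ⊕ Q) :=
  {q | tp k (classWord d q) = τ}

end PrefSynth
/-! ### The prefix Ehrenfeucht–Fraïssé game on data words (with constants) -/

namespace PrefSynth

/-- A pebble placed on a data word: a process pebble, a bounding pebble
or a prefix pebble. -/
inductive Peb (P Q : Type) : Type where
  | proc : P ⊕ Q → Peb P Q
  | bound : ℕ → Peb P Q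
  | pref : ℕ → Peb P Q

/-- The element on which a pebble is placed. -/
def Peb.elem {P Q : Type} : Peb P Q → Elem P Q
  | .proc q => Sum.inl q
  | .bound m => Sum.inr m
  | .pref m => Sum.inr m

/-- `e` is a System process element. -/
def IsProcSE {P Q : Type} (e : Elem P Q) : Prop := ∃ q : P, e = Sum.inl (Sum.inl q)

/-- `e` is an Environment process element. -/
def IsProcEE {P Q : Type} (e : Elem P Q) : Prop := ∃ q : Q, e = Sum.inl (Sum.inr q)

/-- `e` is a position labelled by the letter `a`. -/
def LetterIsE {A B P Q : Type} (d : Word (DMove A B P Q)) (e : Elem P Q) (a : A ⊕ B) :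
    Prop := ∃ m : ℕ, e = Sum.inr m ∧ actAt d m = some a

/-- `e ∼ f` in the data word `d`. -/
def SimE {A B P Q : Type} (d : Word (DMove A B P Q)) (e f : Elem P Q) : Prop :=
  ∃ q, classOfE d e = some q ∧ classOfE d f = some q

/-- `e ≲ f` in the data word `d`. -/
def LesimE {A B P Q : Type} (d : Word (DMove A B P Q)) (e f : Elem P Q) : Prop :=
  ∃ m m' : ℕ, e = Sum.inr m ∧ f = Sum.inr m' ∧ m < m' ∧ SimE d e f

/-- Agreement of a correspondence between elements of two data words: it must
preserve equality, `Proc_S`, `Proc_E`, the letters, `≲` and `∼`. -/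
def AgreeDW {A B P Q P' Q' : Type} (d : Word (DMove A B P Q))
    (d' : Word (DMove A B P' Q')) (E : List (Elem P Q × Elem P' Q')) : Prop :=
  ∀ e ∈ E, ∀ f ∈ E,
    ((e.1 = f.1) ↔ (e.2 = f.2)) ∧
    (IsProcSE e.1 ↔ IsProcSE e.2) ∧
    (IsProcEE e.1 ↔ IsProcEE e.2) ∧
    (∀ a : A ⊕ B, LetterIsE d e.1 a ↔ LetterIsE d' e.2 a) ∧
    (LesimE d e.1 f.1 ↔ LesimE d' e.2 f.2) ∧
    (SimE d e.1 f.1 ↔ SimE d' e.2 f.2)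

/-- A legal bounding move: a position whose class contains no previously placed
bounding pebble (from `l`) and no bounding constant (from `B0`). -/
def LegalBound {A B P Q : Type} (d : Word (DMove A B P Q)) (B0 : List ℕ)
    (l : List (Peb P Q)) (m : ℕ) : Prop :=
  d m ≠ none ∧ (∀ m₀ : ℕ, Peb.bound m₀ ∈ l → procAt d m ≠ procAt d m₀) ∧
    (∀ m₀ ∈ B0, procAt d m ≠ procAt d m₀)

/-- A legal prefix move: a position such that some previously placed bounding
pebble or bounding constant lies in the same class, at a later position. -/
def LegalPref {A B P Q : Type} (d : Word (DMove A B P Q)) (B0 : List ℕ)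
    (l : List (Peb P Q)) (m : ℕ) : Prop :=
  d m ≠ none ∧
    ∃ m₀ : ℕ, (Peb.bound m₀ ∈ l ∨ m₀ ∈ B0) ∧ m < m₀ ∧ procAt d m = procAt d m₀

/-- The matched pairs of elements determined by the constants `E0` and the
pebbles `L`. -/
def pairElems {P Q P' Q' : Type} (E0 : List (Elem P Q × Elem P' Q'))
    (L : List (Peb P Q × Peb P' Q')) : List (Elem P Q × Elem P' Q') :=
  E0 ++ L.map (fun pq => (pq.1.elem, pq.2.elem))

/-- `DupWinDW d d' E0 B0 B0' r L`: Duplicator wins the `r`-round prefix EF game on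
the data words `d` and `d'` with matched constant elements `E0` (the bounding
constants being interpreted by `B0` in `d` and by `B0'` in `d'`) and already
placed matched pebbles `L`. -/
def DupWinDW {A B P Q P' Q' : Type} (d : Word (DMove A B P Q))
    (d' : Word (DMove A B P' Q')) (E0 : List (Elem P Q × Elem P' Q'))
    (B0 B0' : List ℕ) : ℕ → List (Peb P Q × Peb P' Q') → Prop
  | 0, L => AgreeDW d d' (pairElems E0 L)
  | r + 1, L => AgreeDW d d' (pairElems E0 L) ∧
      (∀ q : P ⊕ Q, ∃ q' : P' ⊕ Q',
        DupWinDW d d' E0 B0 B0' r ((Peb.proc q, Peb.proc q') :: L)) ∧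
      (∀ q' : P' ⊕ Q', ∃ q : P ⊕ Q,
        DupWinDW d d' E0 B0 B0' r ((Peb.proc q, Peb.proc q') :: L)) ∧
      (∀ m : ℕ, LegalBound d B0 (L.map Prod.fst) m →
        ∃ m' : ℕ, LegalBound d' B0' (L.map Prod.snd) m' ∧
          DupWinDW d d' E0 B0 B0' r ((Peb.bound m, Peb.bound m') :: L)) ∧
      (∀ m' : ℕ, LegalBound d' B0' (L.map Prod.snd) m' →
        ∃ m : ℕ, LegalBound d B0 (L.map Prod.fst) m ∧
          DupWinDW d d' E0 B0 B0' r ((Peb.bound m, Peb.bound m') :: L)) ∧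
      (∀ m : ℕ, LegalPref d B0 (L.map Prod.fst) m →
        ∃ m' : ℕ, LegalPref d' B0' (L.map Prod.snd) m' ∧
          DupWinDW d d' E0 B0 B0' r ((Peb.pref m, Peb.pref m') :: L)) ∧
      (∀ m' : ℕ, LegalPref d' B0' (L.map Prod.snd) m' →
        ∃ m : ℕ, LegalPref d B0 (L.map Prod.fst) m ∧
          DupWinDW d d' E0 B0 B0' r ((Peb.pref m, Peb.pref m') :: L))

/-- The constants of a data word: interpretations of `cp` process constants,
`cb` bounding constants and `cx` prefix constants.  Validity: bounding and
prefix constants are positions, no two bounding constants share a class, and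
each prefix constant is `≲` some bounding constant. -/
def ValidConsts {A B P Q : Type} {cp cb cx : ℕ} (d : Word (DMove A B P Q))
    (γP : Fin cp → P ⊕ Q) (γB : Fin cb → ℕ) (γX : Fin cx → ℕ) : Prop :=
  (∀ j, d (γB j) ≠ none) ∧ (∀ j, d (γX j) ≠ none) ∧
  (∀ i j, i ≠ j → procAt d (γB i) ≠ procAt d (γB j)) ∧
  (∀ i, ∃ j, γX i < γB j ∧ procAt d (γX i) = procAt d (γB j))

/-- The matched constant elements determined by two interpretations of the same
constant symbols. -/
def constPairs {P Q P' Q' : Type} {cp cb cx : ℕ}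
    (γP : Fin cp → P ⊕ Q) (γB : Fin cb → ℕ) (γX : Fin cx → ℕ)
    (γP' : Fin cp → P' ⊕ Q') (γB' : Fin cb → ℕ) (γX' : Fin cx → ℕ) :
    List (Elem P Q × Elem P' Q') :=
  (List.ofFn fun i : Fin cp =>
    ((Sum.inl (γP i) : Elem P Q), (Sum.inl (γP' i) : Elem P' Q'))) ++
  (List.ofFn fun i : Fin cb =>
    ((Sum.inr (γB i) : Elem P Q), (Sum.inr (γB' i) : Elem P' Q'))) ++
  (List.ofFn fun i : Fin cx =>
    ((Sum.inr (γX i) : Elem P Q), (Sum.inr (γX' i) : Elem P' Q')))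

/-! ### The standard synthesis game -/

/-- A System strategy in the standard synthesis game: given the finite data word
played so far, output a System action and process, or pass (`none` plays the
role of `ε`). -/
abbrev Strat (A B P Q : Type) : Type := List (DMove A B P Q) → Option (A × P)

/-- The list of the first `n` moves of a data word. -/
def histList {M : Type} (d : Word M) (n : ℕ) : List M := (List.range n).filterMap d

/-- The data word `d` is compatible with the System strategy `σ`. -/
def CompatibleStd {A B P Q : Type} (σ : Strat A B P Q) (d : Word (DMove A B P Q)) :
    Prop :=
  ∀ i a p, d i = some (Sum.inl (a, p)) → σ (histList d i) = some (a, p)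

/-- The data word `d` is fair with respect to `σ`: either it is finite and `σ`
passes after it, or (being infinite) if `σ` wants to play infinitely often then
System actions occur infinitely often. -/
def FairStd {A B P Q : Type} (σ : Strat A B P Q) (d : Word (DMove A B P Q)) : Prop :=
  (∃ n, d n = none ∧ (∀ i, i < n → d i ≠ none) ∧ σ (histList d n) = none) ∨
  ((∀ n, d n ≠ none) ∧
    ((∀ N, ∃ i, N ≤ i ∧ σ (histList d (i + 1)) ≠ none) →
     (∀ N, ∃ i, N ≤ i ∧ ∃ a p, d i = some (Sum.inl (a, p)))))

/-- `σ` is winning for `φ` in the standard synthesis game: every compatible and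
fair data word satisfies `φ`. -/
def WinningStd {A B P Q : Type} (φ : PDW A B 0 0 0) (σ : Strat A B P Q) : Prop :=
  ∀ d : Word (DMove A B P Q), Word.Closed d → CompatibleStd σ d → FairStd σ d →
    SatS d φ

/-- System has an `(nS, nE)`-winning strategy for `φ` in the standard synthesis
game: a winning strategy whenever `|P_S| = nS` and `|P_E| = nE`. -/
def SystemWinsStd (A B : Type) (φ : PDW A B 0 0 0) (nS nE : ℕ) : Prop :=
  ∀ (P Q : Type), Finite P → Finite Q → Nat.card P = nS → Nat.card Q = nE →
    ∃ σ : Strat A B P Q, WinningStd φ σ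

/-! ### The symmetric game -/

/-- A System strategy in the symmetric game: may answer by any finite sequence
of System moves (`[]` playing the role of `ε`). -/
abbrev SymStrat (A B P Q : Type) : Type := List (DMove A B P Q) → List (A × P)

/-- The history after `n` rounds of the symmetric game, the Environment playing
the finite blocks `env 0, env 1, …` and System answering according to `σ`,
with strict alternation, Environment first. -/
def symHist {A B P Q : Type} (σ : SymStrat A B P Q) (env : ℕ → List (B × Q)) :
    ℕ → List (DMove A B P Q)
  | 0 => []
  | n + 1 =>
      let h := symHist σ env n ++ (env n).map Sum.inr
      h ++ (σ h).map Sum.inl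

/-- The data word `d` is compatible with the symmetric strategy `σ`: it is the
limit of the histories of an alternating play in which System follows `σ`. -/
def CompatibleSym {A B P Q : Type} (σ : SymStrat A B P Q)
    (d : Word (DMove A B P Q)) : Prop :=
  ∃ env : ℕ → List (B × Q),
    (∀ n i x, (symHist σ env n)[i]? = some x → d i = some x) ∧
    (∀ i, d i ≠ none → ∃ n, i < (symHist σ env n).length)

/-- Fairness in the symmetric game: if `d` is finite then `σ` passes after it. -/
def FairSym {A B P Q : Type} (σ : SymStrat A B P Q) (d : Word (DMove A B P Q)) :
    Prop :=
  ∀ n, d n = none → (∀ i, i < n → d i ≠ none) → σ (histList d n) = []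

/-- `σ` is winning for `φ` in the symmetric game. -/
def WinningSym {A B P Q : Type} (φ : PDW A B 0 0 0) (σ : SymStrat A B P Q) : Prop :=
  ∀ d : Word (DMove A B P Q), Word.Closed d → CompatibleSym σ d → FairSym σ d →
    SatS d φ

/-- System has an `(nS, nE)`-winning strategy for `φ` in the symmetric game. -/
def SystemWinsSym (A B : Type) (φ : PDW A B 0 0 0) (nS nE : ℕ) : Prop :=
  ∀ (P Q : Type), Finite P → Finite Q → Nat.card P = nS → Nat.card Q = nE →
    ∃ σ : SymStrat A B P Q, WinningSym φ σ

/-! ### The token game on types -/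

/-- A node of the arena: a prefFO `k`-type of finite words. -/
abbrev Typ (A : Type) (k : ℕ) : Type := {T : Set (PSen A) // T ∈ WTypes A k}

/-- The initial node: the type of the empty word. -/
def initTyp (A : Type) (k : ℕ) : Typ A k :=
  ⟨tp k (Word.ofList ([] : List A)), ⟨[], rfl⟩⟩

/-- The transition relation of the arena. -/
def typLe {A : Type} {k : ℕ} (τ τ' : Typ A k) : Prop := typeLe k τ.1 τ'.1

/-- A configuration: the position of each token in the arena.  `TS` and `TE` are
the sets of System and Environment tokens. -/
abbrev Conf (A : Type) (k : ℕ) (TS TE : Type) : Type := (TS ⊕ TE) → Typ A k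

/-- A System strategy in the token game: given the sequence of configurations
so far, where to move each System token. -/
abbrev TokStrat (A : Type) (k : ℕ) (TS TE : Type) : Type :=
  List (Conf A k TS TE) → TS → Typ A k

/-- A play of the token game: all tokens start on the initial node, tokens only
move along `⪯`, and the players strictly alternate, Environment first (at even
stages Environment moves, so System tokens stay put; at odd stages System moves). -/
def IsPlay {A : Type} {k : ℕ} {TS TE : Type} (conf : ℕ → Conf A k TS TE) : Prop :=
  (∀ t, conf 0 t = initTyp A k) ∧
  (∀ n t, typLe (conf n t) (conf (n + 1) t)) ∧
  (∀ n, Even n → ∀ t : TS, conf (n + 1) (Sum.inl t) = conf n (Sum.inl t)) ∧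
  (∀ n, ¬ Even n → ∀ t : TE, conf (n + 1) (Sum.inr t) = conf n (Sum.inr t))

/-- The play `conf` is compatible with the System strategy `σ`. -/
def CompatibleTok {A : Type} {k : ℕ} {TS TE : Type} (σ : TokStrat A k TS TE)
    (conf : ℕ → Conf A k TS TE) : Prop :=
  ∀ n, ¬ Even n → ∀ t : TS,
    conf (n + 1) (Sum.inl t) = σ (List.ofFn (fun i : Fin (n + 1) => conf i)) t

/-- The strategy `σ` only suggests legal moves (along `⪯`). -/
def StratLegal {A : Type} {k : ℕ} {TS TE : Type} (σ : TokStrat A k TS TE) : Prop :=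
  ∀ (h : List (Conf A k TS TE)) (hne : h ≠ []) (t : TS),
    typLe (h.getLast hne (Sum.inl t)) (σ h t)

/-- A configuration matches a `k`-counting function `c` (values `≥ k`
representing `k+`): the number of tokens on each type `τ` is exactly `c τ` when
`c τ < k`, and at least `k` otherwise. -/
def CfgMatches {A : Type} {k : ℕ} {TS TE : Type} (c : Typ A k → ℕ)
    (cfg : Conf A k TS TE) : Prop :=
  ∀ τ : Typ A k,
    (c τ < k → Nat.card {t : TS ⊕ TE // cfg t = τ} = c τ) ∧
    (¬ c τ < k → k ≤ Nat.card {t : TS ⊕ TE // cfg t = τ})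

/-- The acceptance set `Acc_φ`: the `k`-counting functions `c` such that every
data word whose numbers of classes of each prefFO `k`-type match `c` satisfies
`φ`. -/
def AccC (A B : Type) (k : ℕ) (φ : PDW A B 0 0 0) (c : Typ (A ⊕ B) k → ℕ) : Prop :=
  (∀ τ, c τ ≤ k) ∧
  ∀ (P Q : Type) (d : Word (DMove A B P Q)), Word.Closed d →
    (∀ τ : Typ (A ⊕ B) k,
      (c τ < k → Cardinal.mk ↥(classesOfType d k τ.1) = (c τ : Cardinal)) ∧
      (¬ c τ < k → (k : Cardinal) ≤ Cardinal.mk ↥(classesOfType d k τ.1))) →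
    SatS d φ

/-- The strategy `σ` is winning in the token game for `φ`: every compatible
maximal play stabilizes in a limit configuration satisfying the acceptance
condition. -/
def TokWinning {A B : Type} {k : ℕ} {TS TE : Type} (φ : PDW A B 0 0 0)
    (σ : TokStrat (A ⊕ B) k TS TE) : Prop :=
  ∀ conf : ℕ → Conf (A ⊕ B) k TS TE, IsPlay conf → CompatibleTok σ conf →
    ∃ N, (∀ n, N ≤ n → conf n = conf N) ∧
      ∃ c : Typ (A ⊕ B) k → ℕ, AccC A B k φ c ∧ CfgMatches c (conf N)

/-- The pair `(nS, nE)` is winning for System in the token game for `φ` (of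
depth `k`). -/
def SystemWinsTok (A B : Type) (k : ℕ) (φ : PDW A B 0 0 0) (nS nE : ℕ) : Prop :=
  ∀ (TS TE : Type), Finite TS → Finite TE → Nat.card TS = nS → Nat.card TE = nE →
    ∃ σ : TokStrat (A ⊕ B) k TS TE, StratLegal σ ∧ TokWinning φ σ

/-! ### An explicit encoding of prefFO^dw sentences, for decidability -/

/-- Encoding of a variable. -/
def encodeDVar {p b x : ℕ} : DVar p b x → ℕ
  | .inl i => Nat.pair 0 i.1
  | .inr (.inl i) => Nat.pair 1 i.1
  | .inr (.inr i) => Nat.pair 2 i.1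

/-- An explicit injective encoding of prefFO^dw formulas over the alphabets
`Fin m` and `Fin n` into the natural numbers. -/
def encodePDW {m n : ℕ} : {p b x : ℕ} → PDW (Fin m) (Fin n) p b x → ℕ
  | _, _, _, .eq v w => Nat.pair 0 (Nat.pair (encodeDVar v) (encodeDVar w))
  | _, _, _, .procS i => Nat.pair 1 i.1
  | _, _, _, .procE i => Nat.pair 2 i.1
  | _, _, _, .letter a v =>
      Nat.pair 3 (Nat.pair
        (Sum.elim (fun i => Nat.pair 0 i.1) (fun j => Nat.pair 1 j.1) a)
        (Sum.elim (fun i => Nat.pair 0 i.1) (fun j => Nat.pair 1 j.1) v))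
  | _, _, _, .lesim i j => Nat.pair 4 (Nat.pair i.1 j.1)
  | _, _, _, .sim i v => Nat.pair 5 (Nat.pair i.1 (encodeDVar v))
  | _, _, _, .and φ ψ => Nat.pair 6 (Nat.pair (encodePDW φ) (encodePDW ψ))
  | _, _, _, .not φ => Nat.pair 7 (encodePDW φ)
  | _, _, _, .exP φ => Nat.pair 8 (encodePDW φ)
  | _, _, _, .exB φ => Nat.pair 9 (encodePDW φ)
  | _, _, _, .exX y φ => Nat.pair 10 (Nat.pair y.1 (encodePDW φ))

end PrefSynth

namespace PrefSynth

/-! ### Auxiliary development for Statement 17 -/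

section Aux

variable {A : Type}

lemma pos_ofList (l : List A) (m : ℕ) : Word.pos (Word.ofList l) m ↔ m < l.length := by
  simp [Word.pos, Word.ofList, List.getElem?_eq_none_iff]

/-! #### Renaming of FO formulas -/

/-- Extension of a renaming under a binder. -/
def extMap {n m : ℕ} (f : Fin n → Fin m) : Fin (n + 1) → Fin (m + 1) :=
  fun i => Fin.lastCases (Fin.last m) (fun j => (f j).castSucc) i

lemma extMap_last {n m : ℕ} (f : Fin n → Fin m) : extMap f (Fin.last n) = Fin.last m := by
  simp [extMap]

lemma extMap_castSucc {n m : ℕ} (f : Fin n → Fin m) (j : Fin n) :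
    extMap f j.castSucc = (f j).castSucc := by simp [extMap]

lemma snoc_comp_extMap {n m : ℕ} (f : Fin n → Fin m) (ρ : Fin m → ℕ) (x : ℕ) :
    (Fin.snoc ρ x : Fin (m+1) → ℕ) ∘ extMap f = Fin.snoc (ρ ∘ f) x := by
  funext i
  induction i using Fin.lastCases with
  | last => simp [extMap_last]
  | cast j => simp [extMap_castSucc]

def FOFm.rename : {n m : ℕ} → (Fin n → Fin m) → FOFm A n → FOFm A m
  | _, _, f, .eq i j => .eq (f i) (f j)
  | _, _, f, .lt i j => .lt (f i) (f j)
  | _, _, f, .letter a i => .letter a (f i)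
  | _, _, f, .and φ ψ => .and (φ.rename f) (ψ.rename f)
  | _, _, f, .not φ => .not (φ.rename f)
  | _, _, f, .ex φ => .ex (φ.rename (extMap f))

lemma FOFm.depth_rename : ∀ {n m : ℕ} (f : Fin n → Fin m) (φ : FOFm A n),
    (φ.rename f).depth = φ.depth
  | _, _, _, .eq _ _ => rfl
  | _, _, _, .lt _ _ => rfl
  | _, _, _, .letter _ _ => rfl
  | _, _, f, .and φ ψ => by
      simp [FOFm.rename, FOFm.depth, FOFm.depth_rename f φ, FOFm.depth_rename f ψ]
  | _, _, f, .not φ => by simp [FOFm.rename, FOFm.depth, FOFm.depth_rename f φ]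
  | _, _, f, .ex φ => by
      simp [FOFm.rename, FOFm.depth, FOFm.depth_rename (extMap f) φ]

lemma FOFm.sat_rename (w : Word A) : ∀ {n m : ℕ} (f : Fin n → Fin m) (φ : FOFm A n)
    (ρ : Fin m → ℕ), FOFm.Sat w (φ.rename f) ρ ↔ FOFm.Sat w φ (ρ ∘ f)
  | _, _, f, .eq i j, ρ => Iff.rfl
  | _, _, f, .lt i j, ρ => Iff.rfl
  | _, _, f, .letter a i, ρ => Iff.rfl
  | _, _, f, .and φ ψ, ρ => by
      simp only [FOFm.rename, FOFm.Sat, FOFm.sat_rename w f φ ρ, FOFm.sat_rename w f ψ ρ]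
  | _, _, f, .not φ, ρ => by
      simp only [FOFm.rename, FOFm.Sat, FOFm.sat_rename w f φ ρ]
  | _, _, f, .ex φ, ρ => by
      simp only [FOFm.rename, FOFm.Sat]
      constructor
      · rintro ⟨m₀, hp, hs⟩
        refine ⟨m₀, hp, ?_⟩
        have := (FOFm.sat_rename w (extMap f) φ (Fin.snoc ρ m₀)).mp hs
        rwa [snoc_comp_extMap] at this
      · rintro ⟨m₀, hp, hs⟩
        refine ⟨m₀, hp, ?_⟩
        rw [FOFm.sat_rename w (extMap f) φ (Fin.snoc ρ m₀), snoc_comp_extMap]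
        exact hs

/-! #### Finite conjunctions -/

def bigAndF {n : ℕ} : List (FOFm A (n + 1)) → FOFm A (n + 1)
  | [] => .eq 0 0
  | φ :: l => .and φ (bigAndF l)

lemma bigAndF_depth {n : ℕ} (k : ℕ) : ∀ (l : List (FOFm A (n + 1))),
    (∀ φ ∈ l, FOFm.depth φ ≤ k) → (bigAndF l).depth ≤ k
  | [], _ => by simp [bigAndF, FOFm.depth]
  | φ :: l, h => by
      simp only [bigAndF, FOFm.depth, max_le_iff]
      exact ⟨h φ (by simp), bigAndF_depth k l fun ψ hψ => h ψ (by simp [hψ])⟩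

lemma bigAndF_sat {n : ℕ} (w : Word A) (ρ : Fin (n+1) → ℕ) : ∀ (l : List (FOFm A (n + 1))),
    (FOFm.Sat w (bigAndF l) ρ ↔ ∀ φ ∈ l, FOFm.Sat w φ ρ)
  | [] => by simp [bigAndF, FOFm.Sat]
  | φ :: l => by
      simp only [bigAndF, FOFm.Sat, bigAndF_sat w ρ l, List.mem_cons]
      constructor
      · rintro ⟨h1, h2⟩ ψ (rfl | hψ)
        · exact h1
        · exact h2 _ hψ
      · intro h
        exact ⟨h φ (Or.inl rfl), fun ψ hψ => h ψ (Or.inr hψ)⟩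

def bigAndP {n : ℕ} : List (PFm A (n + 1)) → PFm A (n + 1)
  | [] => .eq 0 0
  | φ :: l => .and φ (bigAndP l)

lemma bigAndP_depth {n : ℕ} (k : ℕ) : ∀ (l : List (PFm A (n + 1))),
    (∀ φ ∈ l, PFm.depth φ ≤ k) → (bigAndP l).depth ≤ k
  | [], _ => by simp [bigAndP, PFm.depth]
  | φ :: l, h => by
      simp only [bigAndP, PFm.depth, max_le_iff]
      exact ⟨h φ (by simp), bigAndP_depth k l fun ψ hψ => h ψ (by simp [hψ])⟩

lemma bigAndP_sat {n : ℕ} (w : Word A) (ρ : Fin (n+1) → ℕ) : ∀ (l : List (PFm A (n + 1))),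
    (PFm.Sat w (bigAndP l) ρ ↔ ∀ φ ∈ l, PFm.Sat w φ ρ)
  | [] => by simp [bigAndP, PFm.Sat]
  | φ :: l => by
      simp only [bigAndP, PFm.Sat, bigAndP_sat w ρ l, List.mem_cons]
      constructor
      · rintro ⟨h1, h2⟩ ψ (rfl | hψ)
        · exact h1
        · exact h2 _ hψ
      · intro h
        exact ⟨h φ (Or.inl rfl), fun ψ hψ => h ψ (Or.inr hψ)⟩

/-! #### FO equivalence with pebbles -/

/-- Agreement of two words on all FO formulas of depth at most `k`, under any
assignments whose pairs come from the pebble list `L`. -/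
def foEqL (k : ℕ) (x y : Word A) (L : List (ℕ × ℕ)) : Prop :=
  ∀ (n : ℕ) (φ : FOFm A n) (ρ σ : Fin n → ℕ), φ.depth ≤ k →
    (∀ i, (ρ i, σ i) ∈ L) → (FOFm.Sat x φ ρ ↔ FOFm.Sat y φ σ)

lemma foEqL_mono {k k' : ℕ} {x y : Word A} {L : List (ℕ × ℕ)} (hk : k' ≤ k)
    (h : foEqL k x y L) : foEqL k' x y L :=
  fun n φ ρ σ hd hm => h n φ ρ σ (le_trans hd hk) hm

lemma foEqL_swap {k : ℕ} {x y : Word A} {L : List (ℕ × ℕ)} (h : foEqL k x y L) :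
    foEqL k y x (L.map Prod.swap) := by
  intro n φ ρ σ hd hm
  refine (h n φ σ ρ hd ?_).symm
  intro i
  obtain ⟨p, hp, hps⟩ := List.mem_map.mp (hm i)
  have : p = (σ i, ρ i) := by
    have := congrArg Prod.swap hps
    simpa [Prod.swap_swap] using this
  rwa [← this]

lemma swap_swap_list (L : List (ℕ × ℕ)) : (L.map Prod.swap).map Prod.swap = L := by
  simp [List.map_map, Function.comp_def, Prod.swap_swap]

/-- Forth property: if `x` and `y` (the latter finite) agree up to depth `k+1`
with pebbles `L`, Duplicator can answer any pebble placed on `x`. -/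
lemma foEqL_forth (k : ℕ) (x : Word A) (ly : List A) (L : List (ℕ × ℕ))
    (h : foEqL (k + 1) x (Word.ofList ly) L) (m : ℕ) (hm : Word.pos x m) :
    ∃ m', Word.pos (Word.ofList ly) m' ∧ foEqL k x (Word.ofList ly) ((m, m') :: L) := by
  by_contra hcon
  push_neg at hcon
  set y := Word.ofList ly with hy
  set s := L.length with hs
  set ρL : Fin s → ℕ := fun j => (L.get j).1 with hρL
  set σL : Fin s → ℕ := fun j => (L.get j).2 with hσL
  have key : ∀ m' : ℕ, m' < ly.length → ∃ ψ : FOFm A (s + 1), ψ.depth ≤ k ∧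
      FOFm.Sat x ψ (Fin.snoc ρL m) ∧ ¬ FOFm.Sat y ψ (Fin.snoc σL m') := by
    intro m' hm'
    have hpos : Word.pos y m' := (pos_ofList ly m').mpr hm'
    have hnk : ¬ foEqL k x y ((m, m') :: L) := hcon m' hpos
    unfold foEqL at hnk
    push_neg at hnk
    obtain ⟨n, φ, ρ, σ, hd, hmem, hne⟩ := hnk
    have hg : ∀ i : Fin n, ∃ j : Fin (s + 1),
        ((Fin.snoc ρL m : Fin (s+1) → ℕ) j, (Fin.snoc σL m' : Fin (s+1) → ℕ) j) = (ρ i, σ i) := by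
      intro i
      rcases List.mem_cons.mp (hmem i) with heq | hmemL
      · exact ⟨Fin.last s, by simp [Fin.snoc_last, heq]⟩
      · obtain ⟨j, hj⟩ := List.mem_iff_get.mp hmemL
        refine ⟨j.castSucc, ?_⟩
        simp only [Fin.snoc_castSucc, hρL, hσL, hj]
    choose g hg using hg
    have hρ : ρ = (Fin.snoc ρL m : Fin (s+1) → ℕ) ∘ g :=
      funext fun i => (congrArg Prod.fst (hg i)).symm
    have hσ : σ = (Fin.snoc σL m' : Fin (s+1) → ℕ) ∘ g :=
      funext fun i => (congrArg Prod.snd (hg i)).symm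
    have hsx : FOFm.Sat x (φ.rename g) (Fin.snoc ρL m) ↔ FOFm.Sat x φ ρ := by
      rw [FOFm.sat_rename, hρ]
    have hsy : FOFm.Sat y (φ.rename g) (Fin.snoc σL m') ↔ FOFm.Sat y φ σ := by
      rw [FOFm.sat_rename, hσ]
    have hdr : (φ.rename g).depth ≤ k := by rw [FOFm.depth_rename]; exact hd
    rcases hne with ⟨hx, hyn⟩ | ⟨hxn, hyy⟩
    · exact ⟨φ.rename g, hdr, hsx.mpr hx, fun hc => hyn (hsy.mp hc)⟩
    · refine ⟨.not (φ.rename g), hdr, fun hc => hxn (hsx.mp hc), ?_⟩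
      simp only [FOFm.Sat, not_not]
      exact hsy.mpr hyy
  choose F hF using key
  set lψ : List (FOFm A (s + 1)) :=
    (List.range ly.length).attach.map
      (fun p => F p.1 (List.mem_range.mp p.2)) with hlψ
  set χ := bigAndF lψ with hχ
  have hdχ : χ.depth ≤ k := by
    refine bigAndF_depth k lψ ?_
    intro ψ hψ
    obtain ⟨p, _, rfl⟩ := List.mem_map.mp hψ
    exact (hF p.1 (List.mem_range.mp p.2)).1
  have hxΦ : FOFm.Sat x (.ex χ) ρL := by
    refine ⟨m, hm, ?_⟩
    rw [hχ, bigAndF_sat]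
    intro ψ hψ
    obtain ⟨p, _, rfl⟩ := List.mem_map.mp hψ
    exact (hF p.1 (List.mem_range.mp p.2)).2.1
  have hmemL : ∀ i : Fin s, (ρL i, σL i) ∈ L := by
    intro i
    have : (ρL i, σL i) = L.get i := by simp [hρL, hσL]
    rw [this]
    exact L.get_mem i
  have hdΦ : (FOFm.ex χ).depth ≤ k + 1 := by
    simpa [FOFm.depth] using hdχ
  have hyΦ : FOFm.Sat y (.ex χ) σL :=
    (h s (.ex χ) ρL σL hdΦ hmemL).mp hxΦ
  obtain ⟨m'', hp'', hχ''⟩ := hyΦ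
  have hlt : m'' < ly.length := (pos_ofList ly m'').mp hp''
  have hmemψ : F m'' hlt ∈ lψ := by
    rw [hlψ]
    refine List.mem_map.mpr ⟨⟨m'', List.mem_range.mpr hlt⟩, ?_, rfl⟩
    exact List.mem_attach _ _
  have := (bigAndF_sat y (Fin.snoc σL m'') lψ).mp hχ'' _ hmemψ
  exact (hF m'' hlt).2.2 this

lemma foEqL_back (k : ℕ) (lx : List A) (y : Word A) (L : List (ℕ × ℕ))
    (h : foEqL (k + 1) (Word.ofList lx) y L) (m' : ℕ) (hm' : Word.pos y m') :
    ∃ m, Word.pos (Word.ofList lx) m ∧ foEqL k (Word.ofList lx) y ((m, m') :: L) := by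
  obtain ⟨m, hm, h2⟩ := foEqL_forth k y lx (L.map Prod.swap) (foEqL_swap h) m' hm'
  refine ⟨m, hm, ?_⟩
  have := foEqL_swap h2
  simpa [swap_swap_list] using this

/-! #### Composition: concatenating a common suffix -/

lemma comp_main (lx ly lz : List A) :
    ∀ {n : ℕ} (φ : FOFm A n) (k : ℕ), φ.depth ≤ k →
    ∀ (L : List (ℕ × ℕ)) (ρ σ : Fin n → ℕ),
    foEqL k (Word.ofList lx) (Word.ofList ly) L →
    (∀ p ∈ L, p.1 < lx.length ∧ p.2 < ly.length) →
    (∀ i, (ρ i, σ i) ∈ L ∨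
      ∃ t, t < lz.length ∧ ρ i = lx.length + t ∧ σ i = ly.length + t) →
    (FOFm.Sat (Word.ofList (lx ++ lz)) φ ρ ↔ FOFm.Sat (Word.ofList (ly ++ lz)) φ σ) := by
  intro n φ
  induction φ with
  | @eq n i j =>
    intro k hd L ρ σ hEq hB hP
    simp only [FOFm.Sat]
    rcases hP i with hi | ⟨t, ht, hti, hti'⟩ <;> rcases hP j with hj | ⟨u, hu, huj, huj'⟩
    · have := hEq 2 (.eq 0 1) ![ρ i, ρ j] ![σ i, σ j] (by simp [FOFm.depth])
        (fun t => by fin_cases t <;> simpa using (by assumption))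
      simpa [FOFm.Sat] using this
    · have h1 := (hB _ hi).1
      have h2 := (hB _ hi).2
      constructor <;> intro hc <;> omega
    · have h1 := (hB _ hj).1
      have h2 := (hB _ hj).2
      constructor <;> intro hc <;> omega
    · constructor <;> intro hc <;> omega
  | @lt n i j =>
    intro k hd L ρ σ hEq hB hP
    simp only [FOFm.Sat]
    rcases hP i with hi | ⟨t, ht, hti, hti'⟩ <;> rcases hP j with hj | ⟨u, hu, huj, huj'⟩
    · have := hEq 2 (.lt 0 1) ![ρ i, ρ j] ![σ i, σ j] (by simp [FOFm.depth])
        (fun t => by fin_cases t <;> simpa using (by assumption))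
      simpa [FOFm.Sat] using this
    · have h1 := (hB _ hi).1
      have h2 := (hB _ hi).2
      constructor <;> intro hc <;> omega
    · have h1 := (hB _ hj).1
      have h2 := (hB _ hj).2
      constructor <;> intro hc <;> omega
    · constructor <;> intro hc <;> omega
  | @letter n a i =>
    intro k hd L ρ σ hEq hB hP
    simp only [FOFm.Sat]
    rcases hP i with hi | ⟨t, ht, hti, hti'⟩
    · have h1 := (hB _ hi).1
      have h2 := (hB _ hi).2
      have e1 : Word.ofList (lx ++ lz) (ρ i) = Word.ofList lx (ρ i) := by
        simp only [Word.ofList]; rw [List.getElem?_append, if_pos h1]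
      have e2 : Word.ofList (ly ++ lz) (σ i) = Word.ofList ly (σ i) := by
        simp only [Word.ofList]; rw [List.getElem?_append, if_pos h2]
      rw [e1, e2]
      have := hEq 1 (.letter a 0) (fun _ => ρ i) (fun _ => σ i) (by simp [FOFm.depth])
        (fun t => hi)
      simpa [FOFm.Sat] using this
    · have e1 : Word.ofList (lx ++ lz) (ρ i) = Word.ofList lz t := by
        simp only [Word.ofList, hti]
        rw [List.getElem?_append_right (Nat.le_add_right _ _)]
        simp
      have e2 : Word.ofList (ly ++ lz) (σ i) = Word.ofList lz t := by
        simp only [Word.ofList, hti']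
        rw [List.getElem?_append_right (Nat.le_add_right _ _)]
        simp
      rw [e1, e2]
  | @and n φ ψ ihφ ihψ =>
    intro k hd L ρ σ hEq hB hP
    simp only [FOFm.depth, max_le_iff] at hd
    simp only [FOFm.Sat]
    rw [ihφ k hd.1 L ρ σ hEq hB hP, ihψ k hd.2 L ρ σ hEq hB hP]
  | @not n φ ihφ =>
    intro k hd L ρ σ hEq hB hP
    simp only [FOFm.depth] at hd
    simp only [FOFm.Sat]
    rw [ihφ k hd L ρ σ hEq hB hP]
  | @ex n φ ihφ =>
    intro k hd L ρ σ hEq hB hP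
    simp only [FOFm.depth] at hd
    have hd' : φ.depth + 1 ≤ k := hd
    have hEq' : foEqL (φ.depth + 1) (Word.ofList lx) (Word.ofList ly) L :=
      foEqL_mono hd' hEq
    simp only [FOFm.Sat]
    constructor
    · rintro ⟨m, hpm, hsat⟩
      have hmlt : m < lx.length + lz.length := by
        have := (pos_ofList _ m).mp hpm
        simpa using this
      by_cases hcase : m < lx.length
      · obtain ⟨m', hpm', hE2⟩ := foEqL_forth φ.depth (Word.ofList lx) ly L hEq' m
          ((pos_ofList lx m).mpr hcase)
        have hm'lt : m' < ly.length := (pos_ofList ly m').mp hpm'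
        refine ⟨m', (pos_ofList (ly ++ lz) m').mpr (by simp; omega), ?_⟩
        refine (ihφ φ.depth le_rfl ((m, m') :: L) (Fin.snoc ρ m) (Fin.snoc σ m') hE2 ?_ ?_).mp hsat
        · intro p hp
          rcases List.mem_cons.mp hp with rfl | hp'
          · exact ⟨hcase, hm'lt⟩
          · exact hB p hp' 
        · intro i
          induction i using Fin.lastCases with
          | last => simp
          | cast j =>
            simp only [Fin.snoc_castSucc]
            rcases hP j with hj | hj
            · exact Or.inl (List.mem_cons_of_mem _ hj)
            · exact Or.inr hj
      · set t := m - lx.length with hT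
        have htlt : t < lz.length := by omega
        refine ⟨ly.length + t, (pos_ofList (ly ++ lz) _).mpr (by simp; omega), ?_⟩
        refine (ihφ φ.depth le_rfl L (Fin.snoc ρ m) (Fin.snoc σ (ly.length + t))
          (foEqL_mono (by omega) hEq) hB ?_).mp hsat
        intro i
        induction i using Fin.lastCases with
        | last =>
          simp only [Fin.snoc_last]
          exact Or.inr ⟨t, htlt, by omega, rfl⟩
        | cast j => simpa only [Fin.snoc_castSucc] using hP j
    · rintro ⟨m', hpm', hsat⟩
      have hmlt : m' < ly.length + lz.length := by
        have := (pos_ofList _ m').mp hpm'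
        simpa using this
      by_cases hcase : m' < ly.length
      · obtain ⟨m, hpm, hE2⟩ := foEqL_back φ.depth lx (Word.ofList ly) L hEq' m'
          ((pos_ofList ly m').mpr hcase)
        have hmlt2 : m < lx.length := (pos_ofList lx m).mp hpm
        refine ⟨m, (pos_ofList (lx ++ lz) m).mpr (by simp; omega), ?_⟩
        refine (ihφ φ.depth le_rfl ((m, m') :: L) (Fin.snoc ρ m) (Fin.snoc σ m') hE2 ?_ ?_).mpr hsat
        · intro p hp
          rcases List.mem_cons.mp hp with rfl | hp'
          · exact ⟨hmlt2, hcase⟩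
          · exact hB p hp' 
        · intro i
          induction i using Fin.lastCases with
          | last => simp
          | cast j =>
            simp only [Fin.snoc_castSucc]
            rcases hP j with hj | hj
            · exact Or.inl (List.mem_cons_of_mem _ hj)
            · exact Or.inr hj
      · set t := m' - ly.length with hT
        have htlt : t < lz.length := by omega
        refine ⟨lx.length + t, (pos_ofList (lx ++ lz) _).mpr (by simp; omega), ?_⟩
        refine (ihφ φ.depth le_rfl L (Fin.snoc ρ (lx.length + t)) (Fin.snoc σ m')
          (foEqL_mono (by omega) hEq) hB ?_).mpr hsat
        intro i
        induction i using Fin.lastCases with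
        | last =>
          simp only [Fin.snoc_last]
          exact Or.inr ⟨t, htlt, rfl, by omega⟩
        | cast j => simpa only [Fin.snoc_castSucc] using hP j

lemma foEquiv_append {k : ℕ} (lx ly lz : List A)
    (h : foEquiv k (Word.ofList lx) (Word.ofList ly)) :
    foEquiv k (Word.ofList (lx ++ lz)) (Word.ofList (ly ++ lz)) := by
  intro S hd
  have hEq : foEqL k (Word.ofList lx) (Word.ofList ly) [] := by
    intro n φ ρ σ hd' hmem
    match n with
    | 0 =>
      have hρ : ρ = Fin.elim0 := funext fun i => i.elim0
      have hσ : σ = Fin.elim0 := funext fun i => i.elim0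
      rw [hρ, hσ]
      exact h φ hd'
    | n + 1 => exact absurd (hmem 0) (by simp)
  have := comp_main lx ly lz S k hd [] Fin.elim0 Fin.elim0 hEq (by simp)
    (fun i => i.elim0)
  exact this

end Aux

section Aux2

variable {A : Type}

/-! #### Renaming of prefFO formulas (preserving the bounding variable) -/

def PFm.rename : {n m : ℕ} → (Fin (n + 1) → Fin (m + 1)) → PFm A (n + 1) → PFm A (m + 1)
  | _, _, f, .eq i j => .eq (f i) (f j)
  | _, _, f, .lt i j => .lt (f i) (f j)
  | _, _, f, .letter a i => .letter a (f i)
  | _, _, f, .and φ ψ => .and (φ.rename f) (ψ.rename f)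
  | _, _, f, .not φ => .not (φ.rename f)
  | _, _, f, .exlt φ => .exlt (φ.rename (extMap f))

lemma PFm.depth_rename : ∀ {n m : ℕ} (f : Fin (n + 1) → Fin (m + 1)) (φ : PFm A (n + 1)),
    (φ.rename f).depth = φ.depth
  | _, _, _, .eq _ _ => by simp [PFm.rename, PFm.depth]
  | _, _, _, .lt _ _ => by simp [PFm.rename, PFm.depth]
  | _, _, _, .letter _ _ => by simp [PFm.rename, PFm.depth]
  | _, _, f, .and φ ψ => by
      simp [PFm.rename, PFm.depth, PFm.depth_rename f φ, PFm.depth_rename f ψ]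
  | _, _, f, .not φ => by simp [PFm.rename, PFm.depth, PFm.depth_rename f φ]
  | _, _, f, .exlt φ => by
      simp [PFm.rename, PFm.depth, PFm.depth_rename (extMap f) φ]

lemma extMap_zero {n m : ℕ} (f : Fin (n + 1) → Fin (m + 1)) (h : f 0 = 0) :
    extMap f (0 : Fin (n + 2)) = 0 := by
  have h0 : (0 : Fin (n + 2)) = Fin.castSucc (0 : Fin (n + 1)) := by simp
  rw [h0, extMap_castSucc, h]
  simp

lemma PFm.sat_rename (w : Word A) : ∀ {n m : ℕ} (f : Fin (n + 1) → Fin (m + 1)),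
    f 0 = 0 → ∀ (φ : PFm A (n + 1)) (ρ : Fin (m + 1) → ℕ),
    PFm.Sat w (φ.rename f) ρ ↔ PFm.Sat w φ (ρ ∘ f)
  | _, _, f, h0, .eq i j, ρ => by simp [PFm.rename, PFm.Sat]
  | _, _, f, h0, .lt i j, ρ => by simp [PFm.rename, PFm.Sat]
  | _, _, f, h0, .letter a i, ρ => by simp [PFm.rename, PFm.Sat]
  | _, _, f, h0, .and φ ψ, ρ => by
      simp only [PFm.rename, PFm.Sat, PFm.sat_rename w f h0 φ ρ, PFm.sat_rename w f h0 ψ ρ]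
  | _, _, f, h0, .not φ, ρ => by
      simp only [PFm.rename, PFm.Sat, PFm.sat_rename w f h0 φ ρ]
  | _, _, f, h0, .exlt φ, ρ => by
      simp only [PFm.rename, PFm.Sat]
      have hb : (ρ ∘ f) 0 = ρ 0 := by simp [h0]
      rw [hb]
      constructor
      · rintro ⟨m₀, hp, hlt, hs⟩
        refine ⟨m₀, hp, hlt, ?_⟩
        have := (PFm.sat_rename w (extMap f) (extMap_zero f h0) φ (Fin.snoc ρ m₀)).mp hs
        rwa [snoc_comp_extMap] at this
      · rintro ⟨m₀, hp, hlt, hs⟩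
        refine ⟨m₀, hp, hlt, ?_⟩
        rw [PFm.sat_rename w (extMap f) (extMap_zero f h0) φ (Fin.snoc ρ m₀),
          snoc_comp_extMap]
        exact hs

/-! #### Translation of FO formulas into prefFO formulas with a bounding constant -/

/-- The renaming sending the last variable to the bounding variable `0` and
shifting every other variable down by one. -/
def rmap (n : ℕ) : Fin (n + 2) → Fin (n + 1) :=
  fun i => Fin.lastCases 0 (fun j => j) i

lemma rmap_castSucc (n : ℕ) (j : Fin (n + 1)) : rmap n j.castSucc = j := by simp [rmap]

lemma rmap_last (n : ℕ) : rmap n (Fin.last (n + 1)) = 0 := by simp [rmap]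

lemma rmap_zero (n : ℕ) : rmap n 0 = 0 := by
  have h1 := rmap_castSucc n 0
  rwa [Fin.castSucc_zero] at h1

/-- Translation: FO formulas about the prefix ending at the bounding variable
become prefFO formulas, with variable `i` becoming `i.succ`. -/
def FOFm.trans : {n : ℕ} → FOFm A n → PFm A (n + 1)
  | _, .eq i j => .eq i.succ j.succ
  | _, .lt i j => .lt i.succ j.succ
  | _, .letter a i => .letter a i.succ
  | _, .and φ ψ => .and φ.trans ψ.trans
  | _, .not φ => .not φ.trans
  | _, .ex φ => .not (.and (.not (.exlt φ.trans)) (.not (PFm.rename (rmap _) φ.trans)))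

lemma FOFm.depth_trans : ∀ {n : ℕ} (φ : FOFm A n), φ.trans.depth ≤ φ.depth
  | _, .eq _ _ => le_rfl
  | _, .lt _ _ => le_rfl
  | _, .letter _ _ => le_rfl
  | _, .and φ ψ => by
      simp only [FOFm.trans, PFm.depth, FOFm.depth, max_le_iff]
      exact ⟨le_trans (FOFm.depth_trans φ) (le_max_left _ _),
        le_trans (FOFm.depth_trans ψ) (le_max_right _ _)⟩
  | _, .not φ => FOFm.depth_trans φ
  | _, .ex φ => by
      simp only [FOFm.trans, PFm.depth, FOFm.depth, PFm.depth_rename, max_le_iff]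
      constructor <;> [skip; exact le_trans (FOFm.depth_trans φ) (Nat.le_succ _)]
      exact Nat.succ_le_succ (FOFm.depth_trans φ)

lemma snoc_cons (n : ℕ) (m x : ℕ) (ρ : Fin n → ℕ) :
    (Fin.snoc (Fin.cons m ρ : Fin (n + 1) → ℕ) x : Fin (n + 2) → ℕ)
      = Fin.cons m (Fin.snoc ρ x) := by
  funext i
  induction i using Fin.cases with
  | zero =>
    have h0 : (0 : Fin (n + 2)) = Fin.castSucc (0 : Fin (n + 1)) := by simp
    rw [h0, Fin.snoc_castSucc]
    simp
  | succ j =>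
    induction j using Fin.lastCases with
    | last =>
      rw [Fin.succ_last, Fin.snoc_last, ← Fin.succ_last, Fin.cons_succ, Fin.snoc_last]
    | cast j' =>
      rw [Fin.succ_castSucc, Fin.snoc_castSucc, Fin.cons_succ, ← Fin.succ_castSucc,
        Fin.cons_succ, Fin.snoc_castSucc]

lemma cons_comp_rmap (n : ℕ) (m : ℕ) (ρ : Fin n → ℕ) :
    (Fin.cons m ρ : Fin (n + 1) → ℕ) ∘ rmap n = Fin.cons m (Fin.snoc ρ m) := by
  funext i
  induction i using Fin.lastCases with
  | last =>
    have h1 : rmap n (Fin.last (n + 1)) = 0 := by simp [rmap]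
    have h2 : Fin.last (n + 1) = (Fin.last n).succ := by rw [Fin.succ_last]
    simp only [Function.comp_apply, h1]
    rw [h2, Fin.cons_succ, Fin.snoc_last]
    simp
  | cast j =>
    have h1 : rmap n (Fin.castSucc j) = j := by simp [rmap]
    simp only [Function.comp_apply, h1]
    induction j using Fin.cases with
    | zero =>
      have h0 : Fin.castSucc (0 : Fin (n + 1)) = 0 := by simp
      rw [h0]
      simp
    | succ j' =>
      rw [Fin.cons_succ, ← Fin.succ_castSucc, Fin.cons_succ, Fin.snoc_castSucc]

lemma take_pos_iff (W : Word A) (n m : ℕ) :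
    Word.pos (Word.take W n) m ↔ m < n ∧ Word.pos W m := by
  unfold Word.pos Word.take
  by_cases h : m < n <;> simp [h]

lemma FOFm.sat_trans (W : Word A) (m : ℕ) (hm : Word.pos W m) :
    ∀ {n : ℕ} (φ : FOFm A n) (ρ : Fin n → ℕ), (∀ i, ρ i ≤ m) →
      (FOFm.Sat (Word.take W (m + 1)) φ ρ ↔ PFm.Sat W φ.trans (Fin.cons m ρ)) := by
  intro n φ
  induction φ with
  | @eq n i j =>
    intro ρ hb
    simp only [FOFm.trans, FOFm.Sat, PFm.Sat, Fin.cons_succ]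
  | @lt n i j =>
    intro ρ hb
    simp only [FOFm.trans, FOFm.Sat, PFm.Sat, Fin.cons_succ]
  | @letter n a i =>
    intro ρ hb
    simp only [FOFm.trans, FOFm.Sat, PFm.Sat, Fin.cons_succ]
    unfold Word.take
    rw [if_pos (by have := hb i; omega)]
  | @and n φ ψ ihφ ihψ =>
    intro ρ hb
    simp only [FOFm.trans, FOFm.Sat, PFm.Sat, ihφ ρ hb, ihψ ρ hb]
  | @not n φ ihφ =>
    intro ρ hb
    simp only [FOFm.trans, FOFm.Sat, PFm.Sat, ihφ ρ hb]
  | @ex n φ ihφ =>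
    intro ρ hb
    simp only [FOFm.trans, FOFm.Sat, PFm.Sat]
    rw [not_and_or, not_not, not_not]
    have hcons0 : (Fin.cons m ρ : Fin (n + 1) → ℕ) 0 = m := by simp
    constructor
    · rintro ⟨m₀, hp, hs⟩
      obtain ⟨hlt, hpW⟩ := (take_pos_iff W (m + 1) m₀).mp hp
      by_cases hcase : m₀ < m
      · left
        refine ⟨m₀, hpW, by rw [hcons0]; exact hcase, ?_⟩
        rw [snoc_cons]
        exact (ihφ (Fin.snoc ρ m₀) (fun i => by
          induction i using Fin.lastCases with
          | last => simp; omega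
          | cast j => simp [hb j])).mp hs
      · have hm0 : m₀ = m := by omega
        subst hm0
        right
        rw [PFm.sat_rename W (rmap n) (rmap_zero n), cons_comp_rmap]
        exact (ihφ (Fin.snoc ρ m₀) (fun i => by
          induction i using Fin.lastCases with
          | last => simp
          | cast j => simp [hb j])).mp hs
    · rintro (⟨m₀, hpW, hlt, hs⟩ | hs)
      · rw [hcons0] at hlt
        refine ⟨m₀, (take_pos_iff W (m + 1) m₀).mpr ⟨by omega, hpW⟩, ?_⟩
        rw [snoc_cons] at hs
        exact (ihφ (Fin.snoc ρ m₀) (fun i => by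
          induction i using Fin.lastCases with
          | last => simp; omega
          | cast j => simp [hb j])).mpr hs
      · refine ⟨m, (take_pos_iff W (m + 1) m).mpr ⟨by omega, hm⟩, ?_⟩
        rw [PFm.sat_rename W (rmap n) (rmap_zero n), cons_comp_rmap] at hs
        exact (ihφ (Fin.snoc ρ m) (fun i => by
          induction i using Fin.lastCases with
          | last => simp
          | cast j => simp [hb j])).mpr hs

lemma FOFm.sat_trans_sentence (W : Word A) (m : ℕ) (hm : Word.pos W m)
    (S : FOFm A 0) :
    FOFm.Sat (Word.take W (m + 1)) S Fin.elim0 ↔ PFm.Sat W S.trans (fun _ => m) := by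
  have := FOFm.sat_trans W m hm S Fin.elim0 (fun i => i.elim0)
  have hc : (Fin.cons m Fin.elim0 : Fin 1 → ℕ) = fun _ => m := by
    funext i
    induction i using Fin.cases with
    | zero => simp
    | succ j => exact j.elim0
  rwa [hc] at this

/-! #### The forth property at the bounding level -/

lemma pref_forth (k : ℕ) (W : Word A) (lv : List A)
    (h : prefEquiv (k + 1) W (Word.ofList lv)) (b : ℕ) (hb : Word.pos W b) :
    ∃ b', Word.pos (Word.ofList lv) b' ∧ ∀ φ : PFm A 1, φ.depth ≤ k →
      (PFm.Sat W φ (fun _ => b) ↔ PFm.Sat (Word.ofList lv) φ (fun _ => b')) := by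
  by_contra hcon
  push_neg at hcon
  set V := Word.ofList lv with hV
  have key : ∀ b' : ℕ, b' < lv.length → ∃ ψ : PFm A 1, ψ.depth ≤ k ∧
      PFm.Sat W ψ (fun _ => b) ∧ ¬ PFm.Sat V ψ (fun _ => b') := by
    intro b' hb'
    obtain ⟨φ, hd, hne⟩ := hcon b' ((pos_ofList lv b').mpr hb')
    rcases hne with ⟨hx, hyn⟩ | ⟨hxn, hyy⟩
    · exact ⟨φ, hd, hx, hyn⟩
    · exact ⟨.not φ, hd, hxn, by simp only [PFm.Sat, not_not]; exact hyy⟩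
  choose F hF using key
  set lψ : List (PFm A 1) :=
    (List.range lv.length).attach.map
      (fun p => F p.1 (List.mem_range.mp p.2)) with hlψ
  set χ := bigAndP lψ with hχ
  have hdχ : χ.depth ≤ k := by
    refine bigAndP_depth k lψ ?_
    intro ψ hψ
    obtain ⟨p, _, rfl⟩ := List.mem_map.mp hψ
    exact (hF p.1 (List.mem_range.mp p.2)).1
  have hds : (PSen.exB χ).depth ≤ k + 1 := by
    simpa [PSen.depth] using hdχ
  have hsatW : PSen.Sat W (PSen.exB χ) := by
    refine ⟨b, hb, ?_⟩
    rw [hχ, bigAndP_sat]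
    intro ψ hψ
    obtain ⟨p, _, rfl⟩ := List.mem_map.mp hψ
    exact (hF p.1 (List.mem_range.mp p.2)).2.1
  have hsatV : PSen.Sat V (PSen.exB χ) := (h (PSen.exB χ) hds).mp hsatW
  obtain ⟨b'', hp'', hχ''⟩ := hsatV
  have hlt : b'' < lv.length := (pos_ofList lv b'').mp hp''
  have hmemψ : F b'' hlt ∈ lψ := by
    rw [hlψ]
    exact List.mem_map.mpr ⟨⟨b'', List.mem_range.mpr hlt⟩, List.mem_attach _ _, rfl⟩
  exact (hF b'' hlt).2.2 ((bigAndP_sat V (fun _ => b'') lψ).mp hχ'' _ hmemψ)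

/-! #### Word identities -/

lemma take_ofList (l : List A) (n : ℕ) :
    Word.take (Word.ofList l) n = Word.ofList (l.take n) := by
  funext i
  unfold Word.take Word.ofList
  by_cases h : i < n
  · rw [if_pos h, List.getElem?_take, if_pos h]
  · rw [if_neg h]
    exact (List.getElem?_eq_none (by simp; omega)).symm

lemma take_full (l : List A) (hl : l ≠ []) :
    Word.take (Word.ofList l) (l.length - 1 + 1) = Word.ofList l := by
  have hlen : l.length - 1 + 1 = l.length := by
    have := List.length_pos_iff.mpr hl
    omega
  rw [hlen]
  funext i
  unfold Word.take Word.ofList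
  by_cases h : i < l.length
  · rw [if_pos h]
  · rw [if_neg h]
    exact (List.getElem?_eq_none (by omega)).symm

lemma foEquiv_symm {k : ℕ} {w w' : Word A} (h : foEquiv k w w') : foEquiv k w' w :=
  fun S hd => (h S hd).symm

/-- One half of the main statement. -/
lemma half_statement {k : ℕ} (u v : List A) (hu : u ≠ []) (hv : v ≠ [])
    (h : prefEquiv (k + 1) (Word.ofList u) (Word.ofList v)) :
    ∃ u' : List A, foEquiv k (Word.ofList (u ++ u')) (Word.ofList v) := by
  set b := u.length - 1 with hb
  have hbu : Word.pos (Word.ofList u) b := by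
    rw [pos_ofList]
    have := List.length_pos_iff.mpr hu
    omega
  obtain ⟨b', hb', hag⟩ := pref_forth k (Word.ofList u) v h b hbu
  have hbv : b' < v.length := (pos_ofList v b').mp hb'
  have h1 : foEquiv k (Word.ofList u) (Word.ofList (v.take (b' + 1))) := by
    intro S hd
    have e1 := FOFm.sat_trans_sentence (Word.ofList u) b hbu S
    have e2 := FOFm.sat_trans_sentence (Word.ofList v) b' hb' S
    rw [take_full u hu] at e1
    rw [take_ofList v (b' + 1)] at e2
    rw [e1, e2]
    exact hag S.trans (le_trans (FOFm.depth_trans S) hd)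
  refine ⟨v.drop (b' + 1), ?_⟩
  have := foEquiv_append (u) (v.take (b' + 1)) (v.drop (b' + 1)) h1
  rwa [List.take_append_drop] at this

end Aux2

/-- If `u ≡prefFO_{k+1} v` then there exist finite words `u'`,
`v'` such that `u·u' ≡FO_k v` and `u ≡FO_k v·v'`. -/
theorem prefEquiv_imp_foEquiv_extensions {A : Type} [Finite A] (k : ℕ)
    (u v : List A) (h : prefEquiv (k + 1) (Word.ofList u) (Word.ofList v)) :
    ∃ u' v' : List A,
      foEquiv k (Word.ofList (u ++ u')) (Word.ofList v) ∧
      foEquiv k (Word.ofList u) (Word.ofList (v ++ v')) := by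
  have hdne : PSen.depth (PSen.exB (PFm.eq (A := A) 0 0)) ≤ k + 1 := by
    simp [PSen.depth, PFm.depth]
  by_cases hu : u = []
  · have hv : v = [] := by
      by_contra hv
      have hsv : PSen.Sat (Word.ofList v) (PSen.exB (PFm.eq (A := A) 0 0)) := by
        refine ⟨0, ?_, rfl⟩
        rw [pos_ofList]
        exact List.length_pos_iff.mpr hv
      obtain ⟨m, hpos, -⟩ := (h _ hdne).mpr hsv
      rw [pos_ofList, hu] at hpos
      simp at hpos
    subst hu; subst hv
    exact ⟨[], [], fun S hd => Iff.rfl, fun S hd => Iff.rfl⟩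
  · have hv : v ≠ [] := by
      intro hv
      have hsu : PSen.Sat (Word.ofList u) (PSen.exB (PFm.eq (A := A) 0 0)) := by
        refine ⟨0, ?_, rfl⟩
        rw [pos_ofList]
        exact List.length_pos_iff.mpr hu
      obtain ⟨m, hpos, -⟩ := (h _ hdne).mp hsu
      rw [pos_ofList, hv] at hpos
      simp at hpos
    obtain ⟨u', hu'⟩ := half_statement u v hu hv h
    obtain ⟨v', hv'⟩ := half_statement v u hv hu (fun s hd => (h s hd).symm)
    exact ⟨u', v', hu', foEquiv_symm hv'⟩

end PrefSynth
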